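/- Let X be a real vector space, M ⊆ X a nonempty affine subspace, and S a generalized semispace generated by M. Then for every a ∈ M the set {a} ∪ S is convex, and consequently the set M ∪ S is convex. -/

import Mathlib

/-- `S` is a generalized semispace generated by the set `M`: a convex set disjoint from `M`
that is maximal with respect to inclusion among convex subsets disjoint from `M`. -/
def IsGenSemispace {X : Type*} [AddCommGroup X] [Module ℝ X] (M S : Set X) : Prop :=
  Convex ℝ S ∧ S ∩ M = ∅ ∧
    ∀ C : Set X, Convex ℝ C → C ∩ M = ∅ → S ⊆ C → C = S

private lemma genSemispace_key {X : Type*} [AddCommGroup X] [Module ℝ X]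
    (M : AffineSubspace ℝ X) (S : Set X) (hS : IsGenSemispace (M : Set X) S)
    {a s : X} (ha : a ∈ (M : Set X)) (hs : s ∈ S)
    {p q : ℝ} (hp : 0 ≤ p) (hq : 0 < q) (hpq : p + q = 1) :
    p • a + q • s ∈ S := by
  obtain ⟨hconv, hdisj, hmax⟩ := hS
  set z := p • a + q • s with hz
  have hSne : S.Nonempty := ⟨s, hs⟩
  have hC : Convex ℝ (convexHull ℝ (insert z S)) := convex_convexHull _ _
  have hSC : S ⊆ convexHull ℝ (insert z S) :=
    (Set.subset_insert _ _).trans (subset_convexHull _ _)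
  have hdisj' : convexHull ℝ (insert z S) ∩ (M : Set X) = ∅ := by
    rw [Set.eq_empty_iff_forall_notMem]
    rintro m ⟨hmC, hmM⟩
    rw [convexHull_insert hSne, mem_convexJoin] at hmC
    obtain ⟨x, hx, s', hs'C, hseg⟩ := hmC
    rw [Set.mem_singleton_iff] at hx
    subst hx
    rw [hconv.convexHull_eq] at hs'C
    obtain ⟨u, v, hu, hv, huv, hm⟩ := hseg
    rcases eq_or_lt_of_le hu with hu0 | hu0
    · have : m = s' := by
        rw [← hm, ← hu0]; have : v = 1 := by linarith
        rw [this]; simp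
      have : s' ∈ S ∩ (M : Set X) := ⟨hs'C, this ▸ hmM⟩
      rw [hdisj] at this; exact this
    · have hc : (0:ℝ) < u * q + v := by positivity
      set c : ℝ := u * q + v with hcdef
      have hcup : c = 1 - u * p := by
        have : u * (p + q) + v = 1 := by rw [hpq]; linarith
        rw [hcdef]; nlinarith
      have hwS : (u * q / c) • s + (v / c) • s' ∈ S := by
        refine hconv hs hs'C (by positivity) (by positivity) ?_
        field_simp
        exact hcdef.symm
      have hwM : (u * q / c) • s + (v / c) • s' ∈ (M : Set X) := by
        have := M.smul_vsub_vadd_mem c⁻¹ hmM ha ha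
        have hc0 : c ≠ 0 := ne_of_gt hc
        have heq : c⁻¹ • (m -ᵥ a) +ᵥ a = (u * q / c) • s + (v / c) • s' := by
          have hsub : m = (u*p) • a + (u*q) • s + v • s' := by rw [← hm, hz]; module
          rw [hsub]
          simp only [vsub_eq_sub, vadd_eq_add]
          match_scalars <;> field_simp <;> linarith [hcup]
        rw [← heq]; exact this
      have : (u * q / c) • s + (v / c) • s' ∈ S ∩ (M : Set X) := ⟨hwS, hwM⟩
      rw [hdisj] at this; exact this
  have hCeq := hmax _ hC hdisj' hSC
  have : z ∈ convexHull ℝ (insert z S) := subset_convexHull _ _ (Set.mem_insert _ _)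
  rwa [hCeq] at this

theorem genSemispace_union_convex {X : Type*} [AddCommGroup X] [Module ℝ X]
    (M : AffineSubspace ℝ X) (hM : (M : Set X).Nonempty)
    (S : Set X) (hS : IsGenSemispace (M : Set X) S) :
    (∀ a ∈ (M : Set X), Convex ℝ ({a} ∪ S)) ∧ Convex ℝ ((M : Set X) ∪ S) := by
  have key : ∀ a ∈ (M : Set X), ∀ s ∈ S, ∀ p q : ℝ, 0 ≤ p → 0 < q → p + q = 1 →
      p • a + q • s ∈ S := fun a ha s hs p q hp hq hpq => genSemispace_key M S hS ha hs hp hq hpq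
  have part1 : ∀ a ∈ (M : Set X), Convex ℝ ({a} ∪ S) := by
    intro a ha x hx y hy p q hp hq hpq
    have comb : ∀ {b c : X}, b ∈ S → c = a → q • b + p • c ∈ ({a} ∪ S) → True := fun _ _ _ => trivial
    rcases hx with hx | hx <;> rcases hy with hy | hy
    · left
      rw [Set.mem_singleton_iff] at hx hy
      rw [Set.mem_singleton_iff, hx, hy, ← add_smul, hpq, one_smul]
    · rw [Set.mem_singleton_iff] at hx
      rcases eq_or_lt_of_le hq with hq0 | hq0
      · left
        rw [Set.mem_singleton_iff, hx, ← hq0]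
        have : p = 1 := by linarith
        simp [this]
      · right; rw [hx]; exact key a ha y hy p q hp hq0 hpq
    · rw [Set.mem_singleton_iff] at hy
      rcases eq_or_lt_of_le hp with hp0 | hp0
      · left
        rw [Set.mem_singleton_iff, hy, ← hp0]
        have : q = 1 := by linarith
        simp [this]
      · right
        rw [hy, add_comm]
        exact key a ha x hx q p hq hp0 (by linarith)
    · right; exact hS.1 hx hy hp hq hpq
  refine ⟨part1, ?_⟩
  intro x hx y hy p q hp hq hpq
  rcases hx with hx | hx <;> rcases hy with hy | hy
  · left; exact M.convex hx hy hp hq hpq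
  · have := part1 x hx (Set.mem_union_left _ rfl) (Set.mem_union_right _ hy) hp hq hpq
    rcases this with h | h
    · left; rw [Set.mem_singleton_iff] at h; rw [h]; exact hx
    · right; exact h
  · have := part1 y hy (Set.mem_union_right _ hx) (Set.mem_union_left _ rfl) hp hq hpq
    rcases this with h | h
    · left; rw [Set.mem_singleton_iff] at h; rw [h]; exact hy
    · right; exact h
  · right; exact hS.1 hx hy hp hq hpq
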